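/- Let Z, T be finite sets, Q : T → (Z → ℝ>0) a conditional probability kernel with strictly positive entries, and P a probability distribution on T. Define φ(s) = ln Σ_{z} (Σ_{t} P(t) Q(z|t)^{1/(1-s)})^{1-s}. Then the function s ↦ φ(s) is convex on [0, 1/2]. -/

import Mathlib

open Finset

/-- Finite two-function Hölder inequality with weights. -/
lemma holder_sum {ι : Type*} [Fintype ι] (a b : ι → ℝ) (ha : ∀ i, 0 ≤ a i)
    (hb : ∀ i, 0 ≤ b i) (θ τ : ℝ) (hθ : 0 < θ) (hτ : 0 < τ) (hθτ : θ + τ = 1) :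
    ∑ i, a i ^ θ * b i ^ τ ≤ (∑ i, a i) ^ θ * (∑ i, b i) ^ τ := by
  set A := ∑ i, a i with hA
  set B := ∑ i, b i with hB
  have hA0 : 0 ≤ A := Finset.sum_nonneg fun i _ => ha i
  have hB0 : 0 ≤ B := Finset.sum_nonneg fun i _ => hb i
  rcases eq_or_lt_of_le hA0 with h | hApos
  · have hz : ∀ i ∈ Finset.univ, a i = (0 : ℝ) :=
      (Finset.sum_eq_zero_iff_of_nonneg (fun i _ => ha i)).1 h.symm
    have : ∑ i, a i ^ θ * b i ^ τ = 0 := by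
      refine Finset.sum_eq_zero fun i _ => ?_
      rw [hz i (Finset.mem_univ i), Real.zero_rpow hθ.ne', zero_mul]
    rw [this]
    positivity
  rcases eq_or_lt_of_le hB0 with h | hBpos
  · have hz : ∀ i ∈ Finset.univ, b i = (0 : ℝ) :=
      (Finset.sum_eq_zero_iff_of_nonneg (fun i _ => hb i)).1 h.symm
    have : ∑ i, a i ^ θ * b i ^ τ = 0 := by
      refine Finset.sum_eq_zero fun i _ => ?_
      rw [hz i (Finset.mem_univ i), Real.zero_rpow hτ.ne', mul_zero]
    rw [this]
    positivity
  have hAθ : (0:ℝ) < A ^ θ := Real.rpow_pos_of_pos hApos θ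
  have hBτ : (0:ℝ) < B ^ τ := Real.rpow_pos_of_pos hBpos τ
  have key : ∀ i, a i ^ θ * b i ^ τ ≤ (θ * (a i / A) + τ * (b i / B)) * (A ^ θ * B ^ τ) := by
    intro i
    have h1 : (a i / A) ^ θ * (b i / B) ^ τ ≤ θ * (a i / A) + τ * (b i / B) :=
      Real.geom_mean_le_arith_mean2_weighted hθ.le hτ.le
        (div_nonneg (ha i) hA0) (div_nonneg (hb i) hB0) hθτ
    have h2 : (a i / A) ^ θ * (b i / B) ^ τ = a i ^ θ * b i ^ τ / (A ^ θ * B ^ τ) := by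
      rw [Real.div_rpow (ha i) hA0, Real.div_rpow (hb i) hB0]
      field_simp
    rw [h2] at h1
    calc a i ^ θ * b i ^ τ = a i ^ θ * b i ^ τ / (A ^ θ * B ^ τ) * (A ^ θ * B ^ τ) := by
          field_simp
      _ ≤ (θ * (a i / A) + τ * (b i / B)) * (A ^ θ * B ^ τ) :=
          mul_le_mul_of_nonneg_right h1 (by positivity)
  calc ∑ i, a i ^ θ * b i ^ τ
      ≤ ∑ i, (θ * (a i / A) + τ * (b i / B)) * (A ^ θ * B ^ τ) :=
        Finset.sum_le_sum fun i _ => key i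
    _ = (θ * (A / A) + τ * (B / B)) * (A ^ θ * B ^ τ) := by
        rw [← Finset.sum_mul]
        congr 1
        rw [Finset.sum_add_distrib, ← Finset.mul_sum, ← Finset.mul_sum,
          ← Finset.sum_div, ← Finset.sum_div]
    _ = A ^ θ * B ^ τ := by
        rw [div_self hApos.ne', div_self hBpos.ne', mul_one, mul_one, hθτ, one_mul]

/-- Convexity of the Gallager-type function φ on [0, 1/2]. -/
theorem gallager_phi_convex
    {Z T : Type*} [Fintype Z] [Fintype T] [Nonempty Z] [Nonempty T]
    (Q : T → Z → ℝ) (hQpos : ∀ t z, 0 < Q t z) (hQsum : ∀ t, ∑ z : Z, Q t z = 1)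
    (P : T → ℝ) (hPnn : ∀ t, 0 ≤ P t) (hPsum : ∑ t : T, P t = 1)
    (φ : ℝ → ℝ)
    (hφ : ∀ s, φ s =
      Real.log (∑ z : Z, (∑ t : T, P t * Q t z ^ ((1 : ℝ) / (1 - s))) ^ (1 - s))) :
    ConvexOn ℝ (Set.Icc (0 : ℝ) (1 / 2)) φ := by
  have hPt : ∃ t : T, 0 < P t := by
    by_contra h
    push_neg at h
    have : ∑ t : T, P t = 0 :=
      Finset.sum_eq_zero fun t _ => le_antisymm (h t) (hPnn t)
    rw [this] at hPsum; norm_num at hPsum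
  have hSpos : ∀ (u : ℝ) (z : Z), 0 < ∑ t : T, P t * Q t z ^ u := by
    intro u z
    obtain ⟨t0, ht0⟩ := hPt
    exact Finset.sum_pos'
      (fun t _ => mul_nonneg (hPnn t) (Real.rpow_pos_of_pos (hQpos t z) u).le)
      ⟨t0, Finset.mem_univ t0, mul_pos ht0 (Real.rpow_pos_of_pos (hQpos t0 z) u)⟩
  refine ⟨convex_Icc 0 (1/2), ?_⟩
  intro x hx y hy a b hanon hbnon hab
  by_cases ha0 : a = 0
  · have hb1 : b = 1 := by rw [ha0] at hab; linarith
    simp [ha0, hb1]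
  by_cases hb0 : b = 0
  · have ha1 : a = 1 := by rw [hb0] at hab; linarith
    simp [hb0, ha1]
  have ha : 0 < a := lt_of_le_of_ne hanon (Ne.symm ha0)
  have hb : 0 < b := lt_of_le_of_ne hbnon (Ne.symm hb0)
  simp only [smul_eq_mul]
  set lx := 1 - x with hlx
  set ly := 1 - y with hly
  have hlxpos : 0 < lx := by have := hx.2; simp only [hlx]; linarith
  have hlypos : 0 < ly := by have := hy.2; simp only [hly]; linarith
  set L := a * lx + b * ly with hLdef
  have hLpos : 0 < L := by positivity
  have hL1 : 1 - (a * x + b * y) = L := by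
    simp only [hLdef, hlx, hly]
    have h := hab
    linear_combination -h
  set w1 := a * lx / L with hw1
  set w2 := b * ly / L with hw2
  have hw1pos : 0 < w1 := by positivity
  have hw2pos : 0 < w2 := by positivity
  have hw12 : w1 + w2 = 1 := by
    rw [hw1, hw2, ← add_div, hLdef, div_self hLpos.ne']
  set S : ℝ → Z → ℝ := fun u z => ∑ t : T, P t * Q t z ^ u with hS
  have hSpos' : ∀ (u : ℝ) (z : Z), 0 < S u z := fun u z => hSpos u z
  have hexp : (1/lx) * w1 + (1/ly) * w2 = 1/L := by
    rw [hw1, hw2]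
    field_simp
    linarith
  -- Step 1: inner Hölder, log-convexity of u ↦ S u z
  have step1 : ∀ z : Z, S (1/L) z ≤ (S (1/lx) z) ^ w1 * (S (1/ly) z) ^ w2 := by
    intro z
    have heq : S (1/L) z
        = ∑ t : T, (P t * Q t z ^ (1/lx)) ^ w1 * (P t * Q t z ^ (1/ly)) ^ w2 := by
      refine Finset.sum_congr rfl fun t _ => ?_
      rcases eq_or_lt_of_le (hPnn t) with h | hPpos
      · rw [← h]; simp [Real.zero_rpow hw1pos.ne']
      · have hQ := (hQpos t z).le
        rw [Real.mul_rpow hPpos.le (Real.rpow_nonneg hQ _),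
          Real.mul_rpow hPpos.le (Real.rpow_nonneg hQ _),
          ← Real.rpow_mul hQ, ← Real.rpow_mul hQ, mul_mul_mul_comm,
          ← Real.rpow_add hPpos, ← Real.rpow_add (hQpos t z), hw12, Real.rpow_one, hexp]
    rw [heq]
    exact holder_sum _ _
      (fun t => mul_nonneg (hPnn t) (Real.rpow_nonneg (hQpos t z).le _))
      (fun t => mul_nonneg (hPnn t) (Real.rpow_nonneg (hQpos t z).le _))
      w1 w2 hw1pos hw2pos hw12
  -- Step 2: raise to the power L
  have step2 : ∀ z : Z,
      (S (1/L) z) ^ L ≤ ((S (1/lx) z) ^ lx) ^ a * ((S (1/ly) z) ^ ly) ^ b := by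
    intro z
    have h1 : (S (1/L) z) ^ L ≤ ((S (1/lx) z) ^ w1 * (S (1/ly) z) ^ w2) ^ L :=
      Real.rpow_le_rpow (hSpos' _ z).le (step1 z) hLpos.le
    have h2 : ((S (1/lx) z) ^ w1 * (S (1/ly) z) ^ w2) ^ L
        = ((S (1/lx) z) ^ lx) ^ a * ((S (1/ly) z) ^ ly) ^ b := by
      rw [Real.mul_rpow (Real.rpow_nonneg (hSpos' _ z).le _)
          (Real.rpow_nonneg (hSpos' _ z).le _),
        ← Real.rpow_mul (hSpos' _ z).le, ← Real.rpow_mul (hSpos' _ z).le,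
        ← Real.rpow_mul (hSpos' _ z).le, ← Real.rpow_mul (hSpos' _ z).le]
      congr 1
      · congr 1
        rw [hw1]; field_simp
      · congr 1
        rw [hw2]; field_simp
    rw [h2] at h1
    exact h1
  -- Step 3: outer Hölder over z
  have step3 : ∑ z : Z, (S (1/L) z) ^ L
      ≤ (∑ z : Z, (S (1/lx) z) ^ lx) ^ a * (∑ z : Z, (S (1/ly) z) ^ ly) ^ b := by
    calc ∑ z : Z, (S (1/L) z) ^ L
        ≤ ∑ z : Z, ((S (1/lx) z) ^ lx) ^ a * ((S (1/ly) z) ^ ly) ^ b :=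
          Finset.sum_le_sum fun z _ => step2 z
      _ ≤ (∑ z : Z, (S (1/lx) z) ^ lx) ^ a * (∑ z : Z, (S (1/ly) z) ^ ly) ^ b :=
          holder_sum _ _ (fun z => Real.rpow_nonneg (hSpos' _ z).le _)
            (fun z => Real.rpow_nonneg (hSpos' _ z).le _) a b ha hb hab
  -- Step 4: take logarithms
  have hsumpos : ∀ (u v : ℝ), 0 < ∑ z : Z, (S u z) ^ v := fun u v =>
    Finset.sum_pos (fun z _ => Real.rpow_pos_of_pos (hSpos' u z) v) Finset.univ_nonempty
  have hφmid : φ (a * x + b * y) = Real.log (∑ z : Z, (S (1/L) z) ^ L) := by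
    rw [hφ, hL1]
  have hφx : φ x = Real.log (∑ z : Z, (S (1/lx) z) ^ lx) := by rw [hφ, ← hlx]
  have hφy : φ y = Real.log (∑ z : Z, (S (1/ly) z) ^ ly) := by rw [hφ, ← hly]
  rw [hφmid, hφx, hφy]
  calc Real.log (∑ z : Z, (S (1/L) z) ^ L)
      ≤ Real.log ((∑ z : Z, (S (1/lx) z) ^ lx) ^ a * (∑ z : Z, (S (1/ly) z) ^ ly) ^ b) :=
        Real.log_le_log (hsumpos _ _) step3
    _ = a * Real.log (∑ z : Z, (S (1/lx) z) ^ lx)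
        + b * Real.log (∑ z : Z, (S (1/ly) z) ^ ly) := by
        rw [Real.log_mul (Real.rpow_pos_of_pos (hsumpos _ _) a).ne'
            (Real.rpow_pos_of_pos (hsumpos _ _) b).ne',
          Real.log_rpow (hsumpos _ _), Real.log_rpow (hsumpos _ _)]
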